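/- arXiv:2002.02438 — 2 statements merged into one kernel-verified Lean document; each statement's English description precedes it below -/
import Mathlib

section
/- Let z₁, z₂, u₁, u₂, m₁, m₂ ∈ ℂ satisfy |mᵢ|² + |uᵢ zᵢ|² ≤ 1 for i = 1, 2. Then every eigenvalue τ of the 2×2 matrix R = [[z₁ conj(z₂) u₁u₂, m₁m₂], [m₁m₂, conj(z₁) z₂ u₁u₂]] satisfies Re τ ≤ 1. -/
set_option maxHeartbeats 1000000


/-- If `|mᵢ|² + |uᵢ zᵢ|² ≤ 1` for `i = 1,2`, then every eigenvalue `τ` of the matrix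
`R = [[z₁ conj(z₂) u₁u₂, m₁m₂], [m₁m₂, conj(z₁) z₂ u₁u₂]]` satisfies `Re τ ≤ 1`. -/
theorem stmt1 (z₁ z₂ u₁ u₂ m₁ m₂ : ℂ)
    (h₁ : ‖m₁‖ ^ 2 + ‖u₁ * z₁‖ ^ 2 ≤ 1)
    (h₂ : ‖m₂‖ ^ 2 + ‖u₂ * z₂‖ ^ 2 ≤ 1)
    (τ : ℂ) (v : Fin 2 → ℂ) (hv : v ≠ 0)
    (hev : (!![z₁ * (starRingEnd ℂ) z₂ * (u₁ * u₂), m₁ * m₂;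
        m₁ * m₂, (starRingEnd ℂ) z₁ * z₂ * (u₁ * u₂)]).mulVec v = τ • v) :
    τ.re ≤ 1 := by
  set a := v 0 with ha
  set b := v 1 with hb
  have eq0 : z₁ * (starRingEnd ℂ) z₂ * (u₁ * u₂) * a + m₁ * m₂ * b = τ * a := by
    have := congrFun hev 0
    simpa [Matrix.mulVec, dotProduct, Fin.sum_univ_two, Matrix.vecHead, Matrix.vecTail] using this
  have eq1 : m₁ * m₂ * a + (starRingEnd ℂ) z₁ * z₂ * (u₁ * u₂) * b = τ * b := by
    have := congrFun hev 1
    simpa [Matrix.mulVec, dotProduct, Fin.sum_univ_two, Matrix.vecHead, Matrix.vecTail] using this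
  set A := ‖a‖ with hA
  set B := ‖b‖ with hB
  have haa : a * (starRingEnd ℂ) a = ((A ^ 2 : ℝ) : ℂ) := by
    rw [Complex.mul_conj, Complex.sq_norm]
  have hbb : b * (starRingEnd ℂ) b = ((B ^ 2 : ℝ) : ℂ) := by
    rw [Complex.mul_conj, Complex.sq_norm]
  have main : ((A ^ 2 + B ^ 2 : ℝ) : ℂ) * τ =
      ((A ^ 2 : ℝ) : ℂ) * (z₁ * (starRingEnd ℂ) z₂ * (u₁ * u₂)) +
      ((B ^ 2 : ℝ) : ℂ) * ((starRingEnd ℂ) z₁ * z₂ * (u₁ * u₂)) +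
      m₁ * m₂ * (b * (starRingEnd ℂ) a + a * (starRingEnd ℂ) b) := by
    rw [Complex.ofReal_add, ← haa, ← hbb]
    linear_combination (-(starRingEnd ℂ) a) * eq0 + (-(starRingEnd ℂ) b) * eq1
  have hre := congrArg Complex.re main
  simp only [Complex.add_re, Complex.re_ofReal_mul] at hre
  set p := ‖u₁ * z₁‖ with hp
  set q := ‖u₂ * z₂‖ with hq
  set m := ‖m₁‖ with hm
  set n := ‖m₂‖ with hn
  have habs1 : (z₁ * (starRingEnd ℂ) z₂ * (u₁ * u₂)).re ≤ p * q :=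
    (Complex.re_le_norm _).trans (le_of_eq (by
      simp only [hp, hq, norm_mul, Complex.norm_conj]; ring))
  have habs2 : ((starRingEnd ℂ) z₁ * z₂ * (u₁ * u₂)).re ≤ p * q :=
    (Complex.re_le_norm _).trans (le_of_eq (by
      simp only [hp, hq, norm_mul, Complex.norm_conj]; ring))
  have hw : ‖b * (starRingEnd ℂ) a + a * (starRingEnd ℂ) b‖ ≤ 2 * A * B := by
    calc ‖b * (starRingEnd ℂ) a + a * (starRingEnd ℂ) b‖
        ≤ ‖b * (starRingEnd ℂ) a‖ + ‖a * (starRingEnd ℂ) b‖ :=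
          norm_add_le _ _
      _ = 2 * A * B := by simp only [norm_mul, Complex.norm_conj, ← hA, ← hB]; ring
  have habs3 : (m₁ * m₂ * (b * (starRingEnd ℂ) a + a * (starRingEnd ℂ) b)).re ≤
      m * n * (2 * A * B) := by
    refine (Complex.re_le_norm _).trans ?_
    rw [norm_mul, norm_mul, ← hm, ← hn]
    have hmn : (0 : ℝ) ≤ m * n := mul_nonneg (norm_nonneg _) (norm_nonneg _)
    exact mul_le_mul_of_nonneg_left hw hmn
  have hApos : 0 ≤ A := norm_nonneg a
  have hBpos : 0 ≤ B := norm_nonneg b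
  have hppos : 0 ≤ p := norm_nonneg _
  have hqpos : 0 ≤ q := norm_nonneg _
  have hmpos : 0 ≤ m := norm_nonneg _
  have hnpos : 0 ≤ n := norm_nonneg _
  clear_value a b A B p q m n
  have hS : 0 < A ^ 2 + B ^ 2 := by
    rcases Function.ne_iff.mp hv with ⟨i, hi⟩
    fin_cases i
    · have : 0 < A := by simpa [hA, ← ha] using norm_pos_iff.mpr hi
      nlinarith [sq_nonneg B]
    · have : 0 < B := by simpa [hB, ← hb] using norm_pos_iff.mpr hi
      nlinarith [sq_nonneg A]
  have key : (A ^ 2 + B ^ 2) * τ.re ≤ p * q * A ^ 2 + p * q * B ^ 2 + m * n * (2 * A * B) := by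
    have t1 := mul_le_mul_of_nonneg_left habs1 (sq_nonneg A)
    have t2 := mul_le_mul_of_nonneg_left habs2 (sq_nonneg B)
    linarith [hre, t1, t2, habs3]
  have final : p * q * A ^ 2 + p * q * B ^ 2 + m * n * (2 * A * B) ≤ A ^ 2 + B ^ 2 := by
    have h2ab : 2 * A * B ≤ A ^ 2 + B ^ 2 := by nlinarith [sq_nonneg (A - B)]
    have hmn0 : 0 ≤ m * n := mul_nonneg hmpos hnpos
    have h5 := mul_le_mul_of_nonneg_left h2ab hmn0
    have h6 : p * q + m * n ≤ 1 := by nlinarith [sq_nonneg (p - q), sq_nonneg (m - n)]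
    have h7 := mul_le_mul_of_nonneg_right h6 hS.le
    linarith [h5, h7]
  have hfin : (A ^ 2 + B ^ 2) * τ.re ≤ (A ^ 2 + B ^ 2) * 1 := by
    linarith [key.trans final]
  exact le_of_mul_le_mul_left hfin hS
end

section
/- Let z, w, m ∈ ℂ with m ≠ 0, w + m ≠ 0, and suppose −1/m = w + m − |z|²/(w+m). With u := m/(w+m), one has the identity (1 − |m|² − |u|²|z|²)·Im m = (|m|² + |u|²|z|²)·Im w. In particular, if Im m and Im w are both strictly positive, then |m|² + |u|²|z|² < 1. -/
/-- Taking imaginary parts of the scalar Dyson equation gives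
`(1 - |m|² - |u|²|z|²)·Im m = (|m|² + |u|²|z|²)·Im w` with `u = m/(w+m)`;
in particular if `Im m > 0` and `Im w > 0` then `|m|² + |u|²|z|² < 1`. -/
theorem stmt3 (z w m : ℂ) (hm : m ≠ 0) (hwm : w + m ≠ 0)
    (heq : -1 / m = w + m - (‖z‖ : ℂ) ^ 2 / (w + m)) :
    (1 - ‖m‖ ^ 2 - ‖m / (w + m)‖ ^ 2 * ‖z‖ ^ 2) * m.im =
        (‖m‖ ^ 2 + ‖m / (w + m)‖ ^ 2 * ‖z‖ ^ 2) * w.im ∧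
      (0 < m.im → 0 < w.im →
        ‖m‖ ^ 2 + ‖m / (w + m)‖ ^ 2 * ‖z‖ ^ 2 < 1) := by
  have hnm : Complex.normSq m ≠ 0 := (Complex.normSq_pos.mpr hm).ne'
  have hnw : Complex.normSq (w + m) ≠ 0 := (Complex.normSq_pos.mpr hwm).ne'
  have him := congrArg Complex.im heq
  simp [Complex.div_im, Complex.normSq_apply, ← Complex.ofReal_pow] at him
  have habs : ‖m‖ ^ 2 = Complex.normSq m := Complex.sq_norm m
  have habsw : ‖m / (w + m)‖ ^ 2 = Complex.normSq m / Complex.normSq (w + m) := by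
    rw [Complex.sq_norm, Complex.normSq_div]
  have key : (1 - ‖m‖ ^ 2 - ‖m / (w + m)‖ ^ 2 * ‖z‖ ^ 2) * m.im =
        (‖m‖ ^ 2 + ‖m / (w + m)‖ ^ 2 * ‖z‖ ^ 2) * w.im := by
    rw [habs, habsw]
    unfold Complex.normSq at *
    simp at *
    field_simp at him ⊢
    have hA : m.re ^ 2 + m.im ^ 2 ≠ 0 := by
      intro h; apply hnm; nlinarith [h]
    rw [div_eq_iff hA] at him
    linear_combination him
  refine ⟨key, fun h1 h2 => ?_⟩
  nlinarith [key, mul_pos h1 h2]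
end
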